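/- arXiv:2306.15284 — 6 statements merged into one kernel-verified Lean document; each statement's English description precedes it below -/
import Mathlib

section
/- Let μ be the additive arithmetic function with μ(p^n) = log p + log n for prime powers. Then for all positive integers m, n (not necessarily coprime), max(μ(m), μ(n)) ≤ μ(mn) ≤ μ(m) + μ(n). -/
open Finset

private noncomputable def Ffun (k : ℕ) : ℝ :=
  ∑ p ∈ k.primeFactors, (Real.log p + Real.log (k.factorization p))

private lemma fac_zero {k p : ℕ} (h : p ∉ k.primeFactors) : k.factorization p = 0 := by
  rw [← Nat.support_factorization] at h
  exact Finsupp.notMem_support_iff.mp h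

private lemma key_mu (μ : ℕ → ℝ)
    (hμp : ∀ p n : ℕ, p.Prime → 0 < n → μ (p ^ n) = Real.log p + Real.log n)
    (hμmul : ∀ m n : ℕ, 0 < m → 0 < n → Nat.Coprime m n → μ (m * n) = μ m + μ n) :
    ∀ k : ℕ, 0 < k → μ k = Ffun k := by
  intro k
  induction k using Nat.recOnPosPrimePosCoprime with
  | prime_pow p n hp hn =>
    intro _
    rw [hμp p n hp hn, Ffun, Nat.primeFactors_prime_pow hn.ne' hp,
      Nat.Prime.factorization_pow hp]
    simp
  | zero => intro h; exact absurd h (lt_irrefl 0)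
  | one =>
    intro _
    have h := hμmul 1 1 one_pos one_pos (Nat.coprime_one_left 1)
    simp only [mul_one] at h
    have : μ 1 = 0 := by linarith
    rw [this, Ffun]
    simp
  | coprime a b ha hb hab iha ihb =>
    intro _
    have ha0 : 0 < a := by omega
    have hb0 : 0 < b := by omega
    have hazero : ∀ p ∈ b.primeFactors, a.factorization p = 0 := fun p hp =>
      fac_zero (Finset.disjoint_right.mp hab.disjoint_primeFactors hp)
    have hbzero : ∀ p ∈ a.primeFactors, b.factorization p = 0 := fun p hp =>
      fac_zero (Finset.disjoint_left.mp hab.disjoint_primeFactors hp)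
    rw [hμmul a b ha0 hb0 hab, iha ha0, ihb hb0, Ffun, Ffun, Ffun,
      Nat.primeFactors_mul ha0.ne' hb0.ne',
      Finset.sum_union hab.disjoint_primeFactors]
    congr 1
    · exact Finset.sum_congr rfl fun p hp => by
        rw [Nat.factorization_mul ha0.ne' hb0.ne', Finsupp.add_apply, hbzero p hp, add_zero]
    · exact Finset.sum_congr rfl fun p hp => by
        rw [Nat.factorization_mul ha0.ne' hb0.ne', Finsupp.add_apply, hazero p hp, zero_add]

theorem stmt_3 (μ : ℕ → ℝ)
    (hμp : ∀ p n : ℕ, p.Prime → 0 < n → μ (p ^ n) = Real.log p + Real.log n)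
    (hμmul : ∀ m n : ℕ, 0 < m → 0 < n → Nat.Coprime m n → μ (m * n) = μ m + μ n)
    (m n : ℕ) (hm : 0 < m) (hn : 0 < n) :
    max (μ m) (μ n) ≤ μ (m * n) ∧ μ (m * n) ≤ μ m + μ n := by
  have key := key_mu μ hμp hμmul
  have hmn : 0 < m * n := Nat.mul_pos hm hn
  rw [key m hm, key n hn, key (m * n) hmn]
  set A := m.primeFactors with hA
  set B := n.primeFactors with hB
  have hPF : (m * n).primeFactors = A ∪ B := Nat.primeFactors_mul hm.ne' hn.ne'
  have hfac : ∀ p, (m * n).factorization p = m.factorization p + n.factorization p :=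
    fun p => by rw [Nat.factorization_mul hm.ne' hn.ne']; rfl
  set g : ℕ → ℝ := fun p => Real.log p + Real.log ((m * n).factorization p) with hg
  set fa : ℕ → ℝ := fun p => Real.log p + Real.log (m.factorization p) with hfa
  set fb : ℕ → ℝ := fun p => Real.log p + Real.log (n.factorization p) with hfb
  have hFmn : Ffun (m * n) = ∑ p ∈ A ∪ B, g p := by rw [Ffun, hPF]
  have hFm : Ffun m = ∑ p ∈ A, fa p := rfl
  have hFn : Ffun n = ∑ p ∈ B, fb p := rfl
  -- nonnegativity of g terms on A ∪ B
  have hg_nonneg : ∀ p ∈ A ∪ B, 0 ≤ g p := by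
    intro p hp
    have hp' : p ∈ (m * n).primeFactors := by rw [hPF]; exact hp
    have hp1 : (1:ℝ) ≤ p := by exact_mod_cast (Nat.prime_of_mem_primeFactors hp').one_lt.le
    have hk : 0 < (m * n).factorization p :=
      Nat.Prime.factorization_pos_of_dvd (Nat.prime_of_mem_primeFactors hp') hmn.ne'
        (Nat.dvd_of_mem_primeFactors hp')
    have h1 : (1:ℝ) ≤ ((m * n).factorization p : ℝ) := by exact_mod_cast hk
    have := Real.log_nonneg hp1
    have := Real.log_nonneg h1
    simp only [hg]
    linarith
  -- g p = fa p on A \ B, g p = fb p on B \ A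
  have hgA : ∀ p ∈ A \ B, g p = fa p := by
    intro p hp
    rw [Finset.mem_sdiff] at hp
    simp only [hg, hfa, hfac p, fac_zero hp.2, add_zero]
  have hgB : ∀ p ∈ B \ A, g p = fb p := by
    intro p hp
    rw [Finset.mem_sdiff] at hp
    simp only [hg, hfb, hfac p, fac_zero hp.2, zero_add]
  -- on A ∩ B : g p ≤ fa p + fb p
  have hgAB : ∀ p ∈ A ∩ B, g p ≤ fa p + fb p := by
    intro p hp
    rw [Finset.mem_inter] at hp
    have hpp : p.Prime := Nat.prime_of_mem_primeFactors hp.1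
    have hap : 0 < m.factorization p :=
      Nat.Prime.factorization_pos_of_dvd hpp hm.ne' (Nat.dvd_of_mem_primeFactors hp.1)
    have hbp : 0 < n.factorization p :=
      Nat.Prime.factorization_pos_of_dvd hpp hn.ne' (Nat.dvd_of_mem_primeFactors hp.2)
    set a := m.factorization p
    set b := n.factorization p
    have hab : a + b ≤ p * (a * b) := by
      calc a + b ≤ a * b + a * b :=
            add_le_add (Nat.le_mul_of_pos_right a hbp) (Nat.le_mul_of_pos_left b hap)
        _ = 2 * (a * b) := (two_mul _).symm
        _ ≤ p * (a * b) := Nat.mul_le_mul_right _ hpp.two_le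
    have hane : (a:ℝ) ≠ 0 := by exact_mod_cast hap.ne'
    have hbne : (b:ℝ) ≠ 0 := by exact_mod_cast hbp.ne'
    have hpne : (p:ℝ) ≠ 0 := by exact_mod_cast hpp.pos.ne'
    have h1 : Real.log ((a : ℝ) + b) ≤ Real.log (p * (a * b)) := by
      apply Real.log_le_log (by positivity)
      push_cast
      exact_mod_cast hab
    have h2 : Real.log ((p : ℝ) * (a * b)) = Real.log p + (Real.log a + Real.log b) := by
      rw [Real.log_mul hpne (by positivity), Real.log_mul hane hbne]
    simp only [hg, hfa, hfb, hfac p]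
    push_cast
    rw [h2] at h1
    linarith
  -- fa nonneg on A, fb nonneg on B
  have hfa_nonneg : ∀ p ∈ A, 0 ≤ fa p := by
    intro p hp
    have hp1 : (1:ℝ) ≤ p := by exact_mod_cast (Nat.prime_of_mem_primeFactors hp).one_lt.le
    have hk : 0 < m.factorization p :=
      Nat.Prime.factorization_pos_of_dvd (Nat.prime_of_mem_primeFactors hp) hm.ne'
        (Nat.dvd_of_mem_primeFactors hp)
    have h1 : (1:ℝ) ≤ (m.factorization p : ℝ) := by exact_mod_cast hk
    have := Real.log_nonneg hp1
    have := Real.log_nonneg h1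
    simp only [hfa]; linarith
  have hfb_nonneg : ∀ p ∈ B, 0 ≤ fb p := by
    intro p hp
    have hp1 : (1:ℝ) ≤ p := by exact_mod_cast (Nat.prime_of_mem_primeFactors hp).one_lt.le
    have hk : 0 < n.factorization p :=
      Nat.Prime.factorization_pos_of_dvd (Nat.prime_of_mem_primeFactors hp) hn.ne'
        (Nat.dvd_of_mem_primeFactors hp)
    have h1 : (1:ℝ) ≤ (n.factorization p : ℝ) := by exact_mod_cast hk
    have := Real.log_nonneg hp1
    have := Real.log_nonneg h1
    simp only [hfb]; linarith
  constructor
  · -- lower bound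
    rw [max_le_iff, hFmn, hFm, hFn]
    constructor
    · calc ∑ p ∈ A, fa p ≤ ∑ p ∈ A, g p := by
            apply Finset.sum_le_sum
            intro p hp
            have hle : m.factorization p ≤ (m * n).factorization p := by
              rw [hfac p]; exact Nat.le_add_right _ _
            have hap : 0 < m.factorization p :=
              Nat.Prime.factorization_pos_of_dvd (Nat.prime_of_mem_primeFactors hp) hm.ne'
                (Nat.dvd_of_mem_primeFactors hp)
            have : Real.log (m.factorization p) ≤ Real.log ((m * n).factorization p) :=
              Real.log_le_log (by exact_mod_cast hap) (by exact_mod_cast hle)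
            simp only [hfa, hg]; linarith
        _ ≤ ∑ p ∈ A ∪ B, g p :=
            Finset.sum_le_sum_of_subset_of_nonneg Finset.subset_union_left
              (fun p hp _ => hg_nonneg p hp)
    · calc ∑ p ∈ B, fb p ≤ ∑ p ∈ B, g p := by
            apply Finset.sum_le_sum
            intro p hp
            have hle : n.factorization p ≤ (m * n).factorization p := by
              rw [hfac p]; exact Nat.le_add_left _ _
            have hbp : 0 < n.factorization p :=
              Nat.Prime.factorization_pos_of_dvd (Nat.prime_of_mem_primeFactors hp) hn.ne'
                (Nat.dvd_of_mem_primeFactors hp)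
            have : Real.log (n.factorization p) ≤ Real.log ((m * n).factorization p) :=
              Real.log_le_log (by exact_mod_cast hbp) (by exact_mod_cast hle)
            simp only [hfb, hg]; linarith
        _ ≤ ∑ p ∈ A ∪ B, g p :=
            Finset.sum_le_sum_of_subset_of_nonneg Finset.subset_union_right
              (fun p hp _ => hg_nonneg p hp)
  · -- upper bound
    rw [hFmn, hFm, hFn]
    have hsplitA : ∑ p ∈ A, fa p = ∑ p ∈ A \ B, fa p + ∑ p ∈ A ∩ B, fa p := by
      rw [← Finset.sum_union (Finset.disjoint_sdiff_inter A B), Finset.sdiff_union_inter]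
    have hsplitB : ∑ p ∈ B, fb p = ∑ p ∈ B \ A, fb p + ∑ p ∈ A ∩ B, fb p := by
      rw [Finset.inter_comm, ← Finset.sum_union (Finset.disjoint_sdiff_inter B A),
        Finset.sdiff_union_inter]
    have hsplitU : ∑ p ∈ A ∪ B, g p =
        ∑ p ∈ A \ B, g p + ∑ p ∈ B \ A, g p + ∑ p ∈ A ∩ B, g p := by
      have h1 : A ∪ B = (A \ B) ∪ ((B \ A) ∪ (A ∩ B)) := by
        ext p
        simp only [Finset.mem_union, Finset.mem_sdiff, Finset.mem_inter]
        tauto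
      have d1 : Disjoint (B \ A) (A ∩ B) := by
        rw [Finset.disjoint_left]
        intro p hp hp'
        rw [Finset.mem_sdiff] at hp
        rw [Finset.mem_inter] at hp'
        exact hp.2 hp'.1
      have d2 : Disjoint (A \ B) ((B \ A) ∪ (A ∩ B)) := by
        rw [Finset.disjoint_left]
        intro p hp hp'
        rw [Finset.mem_sdiff] at hp
        rw [Finset.mem_union, Finset.mem_sdiff, Finset.mem_inter] at hp'
        tauto
      rw [h1, Finset.sum_union d2, Finset.sum_union d1, add_assoc]
    rw [hsplitU, hsplitA, hsplitB,
      Finset.sum_congr rfl hgA, Finset.sum_congr rfl hgB]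
    have h3 := Finset.sum_le_sum hgAB
    have h4 : ∑ p ∈ A ∩ B, (fa p + fb p) = ∑ p ∈ A ∩ B, fa p + ∑ p ∈ A ∩ B, fb p :=
      Finset.sum_add_distrib
    linarith
end

section
/- Let T be the Collatz map T(n) = (3n+1)/2 for odd n and T(n) = n/2 for even n. Let j ≥ 2, 0 ≤ k ≤ j−1, and suppose n ≡ −1 − (2/3)^k (mod 2^j), meaning 3^k(n+1) + 2^k ≡ 0 (mod 2^j). Then for 0 ≤ i < j, T^i(n) is even if and only if i = k. -/
/-- The shortcut Collatz map. -/
def T (n : ℕ) : ℕ := if n % 2 = 1 then (3 * n + 1) / 2 else n / 2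

lemma T_odd (x : ℕ) (h : x % 2 = 1) : T x = (3 * x + 1) / 2 := by simp [T, h]

lemma T_even (x : ℕ) (h : x % 2 = 0) : T x = x / 2 := by
  simp [T, h]

lemma pow3_odd (m : ℕ) : 3 ^ m % 2 = 1 := by
  rw [Nat.pow_mod]; norm_num

theorem stmt_8 (j k n : ℕ) (hj : 2 ≤ j) (hk : k ≤ j - 1)
    (hcong : 3 ^ k * (n + 1) + 2 ^ k ≡ 0 [MOD 2 ^ j]) :
    ∀ i < j, (T^[i] n) % 2 = 0 ↔ i = k := by
  have hkj : k < j := by omega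
  have hdvd : (2:ℕ) ^ j ∣ 3 ^ k * (n + 1) + 2 ^ k :=
    (Nat.modEq_zero_iff_dvd).mp hcong
  -- Phase A: up to step k
  have A : ∀ i ≤ k, 2 ^ (j - i) ∣ 3 ^ (k - i) * (T^[i] n + 1) + 2 ^ (k - i) := by
    intro i hi
    induction i with
    | zero => simpa using hdvd
    | succ i ih =>
      have hi' : i ≤ k := Nat.le_of_succ_le hi
      have ihh := ih hi'
      set x := T^[i] n with hx
      have hki : 1 ≤ k - i := by omega
      have hji : 2 ≤ j - i := by omega
      have hxodd : x % 2 = 1 := by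
        by_contra h
        have hx0 : x % 2 = 0 := by omega
        have h2 : (2:ℕ) ∣ 3 ^ (k - i) * (x + 1) + 2 ^ (k - i) :=
          dvd_trans (dvd_pow_self 2 (by omega : j - i ≠ 0)) ihh
        have hp2 : (2:ℕ) ^ (k - i) % 2 = 0 := by
          rw [Nat.pow_mod]
          norm_num [zero_pow (by omega : k - i ≠ 0)]
        have h3 : (3 ^ (k - i) * (x + 1) + 2 ^ (k - i)) % 2 = 1 := by
          rw [Nat.add_mod, Nat.mul_mod, pow3_odd, hp2]
          omega
        omega
      have hstep : T^[i+1] n = (3 * x + 1) / 2 := by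
        rw [Function.iterate_succ_apply', ← hx, T_odd x hxodd]
      rw [hstep]
      have hmul : 2 * (3 ^ (k - (i+1)) * ((3 * x + 1) / 2 + 1) + 2 ^ (k - (i+1)))
          = 3 ^ (k - i) * (x + 1) + 2 ^ (k - i) := by
        have e1 : k - i = (k - (i+1)) + 1 := by omega
        have h31 : 3 * (x + 1) = 2 * ((3 * x + 1) / 2 + 1) := by omega
        calc 2 * (3 ^ (k-(i+1)) * ((3*x+1)/2+1) + 2 ^ (k-(i+1)))
            = 3 ^ (k-(i+1)) * (2 * ((3*x+1)/2+1)) + 2 ^ (k-(i+1)) * 2 := by ring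
          _ = 3 ^ (k-(i+1)) * (3*(x+1)) + 2 ^ (k-(i+1)) * 2 := by rw [← h31]
          _ = 3 ^ (k-i) * (x+1) + 2 ^ (k-i) := by rw [e1, pow_succ, pow_succ]; ring
      have e2 : (2:ℕ) ^ (j - i) = 2 * 2 ^ (j - (i+1)) := by
        rw [← pow_succ']
        congr 1
        omega
      rw [e2] at ihh
      rw [← hmul] at ihh
      exact (Nat.mul_dvd_mul_iff_left (by norm_num : (0:ℕ) < 2)).mp ihh
  -- oddness for i < k
  have Aodd : ∀ i < k, T^[i] n % 2 = 1 := by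
    intro i hik
    have ihh := A i (le_of_lt hik)
    by_contra h
    have hx0 : T^[i] n % 2 = 0 := by omega
    have h2 : (2:ℕ) ∣ 3 ^ (k - i) * (T^[i] n + 1) + 2 ^ (k - i) :=
      dvd_trans (dvd_pow_self 2 (by omega : j - i ≠ 0)) ihh
    have hp2 : (2:ℕ) ^ (k - i) % 2 = 0 := by
      rw [Nat.pow_mod]
      norm_num [zero_pow (by omega : k - i ≠ 0)]
    have h3 : (3 ^ (k - i) * (T^[i] n + 1) + 2 ^ (k - i)) % 2 = 1 := by
      rw [Nat.add_mod, Nat.mul_mod, pow3_odd, hp2]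
      omega
    omega
  -- evenness at k
  have hAk := A k le_rfl
  simp only [Nat.sub_self, pow_zero, one_mul] at hAk
  have hkeven : T^[k] n % 2 = 0 := by
    have h2 : (2:ℕ) ∣ T^[k] n + 1 + 1 :=
      dvd_trans (dvd_pow_self 2 (by omega : j - k ≠ 0)) hAk
    omega
  -- Phase B
  have B : ∀ i, k < i → i ≤ j → 2 ^ (j - i) ∣ T^[i] n + 1 := by
    intro i
    induction i with
    | zero => omega
    | succ m ih =>
      intro hkm hmj
      have hkm' : k ≤ m := Nat.lt_succ_iff.mp hkm
      rcases eq_or_lt_of_le hkm' with h | h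
      · -- base: m = k
        subst h
        have hstep : T^[k+1] n = T^[k] n / 2 := by
          rw [Function.iterate_succ_apply', T_even _ hkeven]
        rw [hstep]
        have hmul : 2 * (T^[k] n / 2 + 1) = T^[k] n + 1 + 1 := by omega
        have e2 : (2:ℕ) ^ (j - k) = 2 * 2 ^ (j - (k+1)) := by
          rw [← pow_succ']; congr 1; omega
        rw [e2, ← hmul] at hAk
        exact (Nat.mul_dvd_mul_iff_left (by norm_num : (0:ℕ) < 2)).mp hAk
      · -- step: k < m
        have ihh := ih h (by omega)
        set x := T^[m] n with hx
        have hxodd : x % 2 = 1 := by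
          have h2 : (2:ℕ) ∣ x + 1 :=
            dvd_trans (dvd_pow_self 2 (by omega : j - m ≠ 0)) ihh
          omega
        have hstep : T^[m+1] n = (3 * x + 1) / 2 := by
          rw [Function.iterate_succ_apply', ← hx, T_odd x hxodd]
        rw [hstep]
        have hmul : 2 * ((3 * x + 1) / 2 + 1) = 3 * (x + 1) := by omega
        have ihh3 : (2:ℕ) ^ (j - m) ∣ 3 * (x + 1) := Dvd.dvd.mul_left ihh 3
        have e2 : (2:ℕ) ^ (j - m) = 2 * 2 ^ (j - (m+1)) := by
          rw [← pow_succ']; congr 1; omega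
        rw [e2, ← hmul] at ihh3
        exact (Nat.mul_dvd_mul_iff_left (by norm_num : (0:ℕ) < 2)).mp ihh3
  -- assemble
  intro i hij
  rcases lt_trichotomy i k with h | h | h
  · have := Aodd i h
    constructor
    · intro he; omega
    · intro he; omega
  · subst h
    simp [hkeven]
  · have hB := B i h (le_of_lt hij)
    have h2 : (2:ℕ) ∣ T^[i] n + 1 :=
      dvd_trans (dvd_pow_self 2 (by omega : j - i ≠ 0)) hB
    constructor
    · intro he; omega
    · intro he; omega
end

section
/- Let T be the shortcut Collatz map, j ≥ 2, and let n < 2^j be a positive integer such that n, T(n), …, T^{j−1}(n) contains exactly one even term. Then n ≥ 2^{j/(1+ρ)} − 2, where ρ = log 3 / log 2. -/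
lemma odd_chain : ∀ (s m : ℕ), (∀ i, i < s → T^[i] m % 2 = 1) →
    2 ^ s * (T^[s] m + 1) = 3 ^ s * (m + 1) := by
  intro s
  induction s with
  | zero => intro m _; simp
  | succ s ih =>
    intro m h
    have h0 : m % 2 = 1 := by simpa using h 0 (Nat.succ_pos s)
    have hT : 2 * T m = 3 * m + 1 := by
      simp only [T, h0, if_true]
      omega
    have h' : ∀ i, i < s → T^[i] (T m) % 2 = 1 := by
      intro i hi
      have := h (i + 1) (by omega)
      simpa [Function.iterate_succ_apply] using this
    have := ih (T m) h'
    calc 2 ^ (s+1) * (T^[s+1] m + 1) = 2 * (2 ^ s * (T^[s] (T m) + 1)) := by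
          rw [Function.iterate_succ_apply]; ring
      _ = 2 * (3 ^ s * (T m + 1)) := by rw [this]
      _ = 3 ^ s * (2 * T m + 2) := by ring
      _ = 3 ^ s * (3 * m + 3) := by rw [hT]
      _ = 3 ^ (s+1) * (m + 1) := by ring

theorem stmt_10 (j n : ℕ) (hj : 2 ≤ j) (hn : 0 < n) (hlt : n < 2 ^ j)
    (hone : ((Finset.range j).filter (fun i => (T^[i] n) % 2 = 0)).card = 1) :
    (2 : ℝ) ^ ((j : ℝ) / (1 + Real.log 3 / Real.log 2)) - 2 ≤ (n : ℝ) := by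
  obtain ⟨k, hk⟩ := Finset.card_eq_one.mp hone
  have hkmem : k ∈ (Finset.range j).filter (fun i => (T^[i] n) % 2 = 0) := by
    rw [hk]; exact Finset.mem_singleton_self k
  rw [Finset.mem_filter, Finset.mem_range] at hkmem
  obtain ⟨hkj, hkeven⟩ := hkmem
  have hodd : ∀ i, i < j → i ≠ k → T^[i] n % 2 = 1 := by
    intro i hij hik
    by_contra hcon
    have : i ∈ (Finset.range j).filter (fun i => (T^[i] n) % 2 = 0) := by
      rw [Finset.mem_filter, Finset.mem_range]; exact ⟨hij, by omega⟩
    rw [hk, Finset.mem_singleton] at this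
    exact hik this
  -- head
  have h1 : 2 ^ k * (T^[k] n + 1) = 3 ^ k * (n + 1) :=
    odd_chain k n (fun i hi => hodd i (by omega) (by omega))
  -- tail
  have h2 : 2 ^ (j-1-k) * (T^[j-1-k] (T^[k+1] n) + 1) = 3 ^ (j-1-k) * (T^[k+1] n + 1) := by
    apply odd_chain
    intro i hi
    rw [← Function.iterate_add_apply]
    exact hodd (i + (k+1)) (by omega) (by omega)
  have hdvd2 : 2 ^ (j-1-k) ∣ T^[k+1] n + 1 := by
    have : 2 ^ (j-1-k) ∣ 3 ^ (j-1-k) * (T^[k+1] n + 1) := ⟨_, h2.symm⟩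
    exact ((by decide : Nat.Coprime 2 3).pow _ _).dvd_of_dvd_mul_left this
  have hge2 : 2 ^ (j-1-k) ≤ T^[k+1] n + 1 := Nat.le_of_dvd (Nat.succ_pos _) hdvd2
  -- even step
  have hTeven : 2 * T^[k+1] n = T^[k] n := by
    rw [Function.iterate_succ_apply']
    simp only [T]
    have : ¬ (T^[k] n % 2 = 1) := by omega
    rw [if_neg this]
    omega
  have hdvd1 : 2 ^ k ∣ n + 1 := by
    have : 2 ^ k ∣ 3 ^ k * (n + 1) := ⟨_, h1.symm⟩
    exact ((by decide : Nat.Coprime 2 3).pow _ _).dvd_of_dvd_mul_left this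
  have hge1 : 2 ^ k ≤ n + 1 := Nat.le_of_dvd (Nat.succ_pos n) hdvd1
  -- key inequality
  have hstar : 2 ^ j ≤ 3 ^ k * (n + 1) + 2 ^ k := by
    have e1 : 3 ^ k * (n + 1) + 2 ^ k = 2 ^ (k+1) * (T^[k+1] n + 1) := by
      rw [← h1]
      have : 2 ^ (k+1) * (T^[k+1] n + 1) = 2 ^ k * (2 * T^[k+1] n + 2) := by ring
      rw [this, hTeven]
      ring
    rw [e1]
    calc 2 ^ j = 2 ^ (k+1) * 2 ^ (j-1-k) := by rw [← pow_add]; congr 1; omega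
      _ ≤ 2 ^ (k+1) * (T^[k+1] n + 1) := Nat.mul_le_mul_left _ hge2
  -- real analysis
  set r : ℝ := Real.log 3 / Real.log 2 with hr_def
  have hlog2 : (0:ℝ) < Real.log 2 := Real.log_pos (by norm_num)
  have hlog3 : (0:ℝ) < Real.log 3 := Real.log_pos (by norm_num)
  have hr_pos : 0 < r := div_pos hlog3 hlog2
  have hr_gt1 : 1 < r := by
    rw [hr_def, lt_div_iff₀ hlog2]
    have := Real.log_lt_log (by norm_num : (0:ℝ) < 2) (by norm_num : (2:ℝ) < 3)
    linarith
  have h2r : (2:ℝ) ^ r = 3 := by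
    rw [Real.rpow_def_of_pos (by norm_num)]
    rw [hr_def, mul_comm, div_mul_cancel₀ _ (ne_of_gt hlog2)]
    exact Real.exp_log (by norm_num)
  have h1r_pos : (0:ℝ) < 1 + r := by linarith
  set M : ℝ := (2:ℝ) ^ ((j:ℝ) / (1 + r)) with hM_def
  have hM_pos : 0 < M := Real.rpow_pos_of_pos (by norm_num) _
  have hM_pow : M ^ (1 + r) = (2:ℝ) ^ (j:ℝ) := by
    rw [hM_def, ← Real.rpow_mul (by norm_num : (0:ℝ) ≤ 2),
      div_mul_cancel₀ _ (ne_of_gt h1r_pos)]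
  have h3k : ((3:ℝ)) ^ k = (2:ℝ) ^ (r * (k:ℝ)) := by
    rw [← h2r, ← Real.rpow_natCast ((2:ℝ) ^ r) k, ← Real.rpow_mul (by norm_num : (0:ℝ) ≤ 2)]
  have h2k : ((2:ℝ)) ^ k = (2:ℝ) ^ ((k:ℝ)) := (Real.rpow_natCast 2 k).symm
  have hstarR : (2:ℝ) ^ (j:ℝ) ≤ (3:ℝ) ^ k * ((n:ℝ) + 1) + (2:ℝ) ^ ((k:ℝ)) := by
    rw [Real.rpow_natCast 2 j, Real.rpow_natCast 2 k]
    exact_mod_cast hstar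
  have hge1R : (2:ℝ) ^ ((k:ℝ)) ≤ (n:ℝ) + 1 := by
    rw [Real.rpow_natCast 2 k]; exact_mod_cast hge1
  by_cases hc : (j:ℝ) / (1 + r) ≤ (k:ℝ)
  · -- large k case
    have hMk : M ≤ (2:ℝ) ^ ((k:ℝ)) :=
      (Real.rpow_le_rpow_left_iff (by norm_num : (1:ℝ) < 2)).mpr hc
    linarith
  · push_neg at hc
    have hM_ge1 : 1 ≤ M := Real.one_le_rpow (by norm_num)
      (div_nonneg (Nat.cast_nonneg j) h1r_pos.le)
    have hMr_pos : 0 < M ^ r := Real.rpow_pos_of_pos hM_pos r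
    have h3kM : (3:ℝ) ^ k ≤ M ^ r := by
      rw [h3k, hM_def, ← Real.rpow_mul (by norm_num : (0:ℝ) ≤ 2)]
      apply Real.rpow_le_rpow_of_exponent_le (by norm_num)
      rw [mul_comm]
      exact mul_le_mul_of_nonneg_right hc.le hr_pos.le
    have hMsplit : M ^ (1 + r) = M ^ r * M := by
      rw [Real.rpow_add hM_pos, Real.rpow_one]; ring
    have hM1r_le : M ^ (1 - r) ≤ 1 :=
      Real.rpow_le_one_of_one_le_of_nonpos hM_ge1 (by linarith)
    have hM1r_mul : M ^ (1 - r) * M ^ r = M := by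
      rw [← Real.rpow_add hM_pos]; norm_num
    have h2kM : (2:ℝ) ^ ((k:ℝ)) < M :=
      (Real.rpow_lt_rpow_left_iff (by norm_num : (1:ℝ) < 2)).mpr hc
    have h3k_pos : (0:ℝ) < (3:ℝ) ^ k := by positivity
    have hn1 : (0:ℝ) ≤ (n:ℝ) + 1 := by positivity
    -- M^r * (n+1) ≥ 3^k * (n+1) ≥ 2^j - M = M^r*M - M
    have key : M ^ r * ((n:ℝ) + 1) ≥ M ^ r * M - M := by
      have h1' : (3:ℝ) ^ k * ((n:ℝ) + 1) ≥ (2:ℝ) ^ (j:ℝ) - M := by linarith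
      have h2' : M ^ r * ((n:ℝ) + 1) ≥ (3:ℝ) ^ k * ((n:ℝ) + 1) :=
        mul_le_mul_of_nonneg_right h3kM hn1
      have hMM : (2:ℝ) ^ (j:ℝ) = M ^ r * M := by rw [← hM_pow, hMsplit]
      linarith
    -- divide: n+1 ≥ M - M/M^r = M - M^(1-r) ≥ M - 1
    nlinarith [mul_le_mul_of_nonneg_right hM1r_le hMr_pos.le, hM1r_mul, key, hMr_pos]
end

section
/- Let T be the shortcut Collatz map and suppose n, T(n), …, T^{j−1}(n) (j ≥ 2) are all odd except T^k(n) with 1 ≤ k ≤ j−1, and n < 2^j. Then 2^k divides n+1, and writing n + 1 = 2^k·A, there is a positive integer B with 1 + 3^k·A = 2^{j−k}·B, where 3^k·A and 2^{j−k}·B are coprime. -/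
lemma Tstep {x : ℕ} (hx : x % 2 = 1) : 2 * (T x + 1) = 3 * (x + 1) := by
  simp only [T, hx, if_pos]
  omega

lemma chain (n a b : ℕ) (h : ∀ i, a ≤ i → i < b → T^[i] n % 2 = 1) :
    ∀ d, a + d ≤ b → 2 ^ d * (T^[a + d] n + 1) = 3 ^ d * (T^[a] n + 1) := by
  intro d
  induction d with
  | zero => intro _; simp
  | succ d ih =>
    intro hd
    have hodd : T^[a + d] n % 2 = 1 := h _ (by omega) (by omega)
    have hs : T^[a + (d + 1)] n = T (T^[a + d] n) := by
      rw [show a + (d + 1) = a + d + 1 from rfl, Function.iterate_succ_apply']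
    calc 2 ^ (d + 1) * (T^[a + (d + 1)] n + 1)
        = 2 ^ d * (2 * (T (T^[a + d] n) + 1)) := by rw [hs]; ring
      _ = 2 ^ d * (3 * (T^[a + d] n + 1)) := by rw [Tstep hodd]
      _ = 3 * (2 ^ d * (T^[a + d] n + 1)) := by ring
      _ = 3 ^ (d + 1) * (T^[a] n + 1) := by rw [ih (by omega)]; ring

theorem stmt_11 (j k n : ℕ) (hj : 2 ≤ j) (hk1 : 1 ≤ k) (hkj : k ≤ j - 1)
    (hlt : n < 2 ^ j)
    (hpar : ∀ i < j, (T^[i] n) % 2 = 0 ↔ i = k) :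
    2 ^ k ∣ n + 1 ∧
      ∃ B : ℕ, 0 < B ∧ 1 + 3 ^ k * ((n + 1) / 2 ^ k) = 2 ^ (j - k) * B ∧
        Nat.Coprime (3 ^ k * ((n + 1) / 2 ^ k)) (2 ^ (j - k) * B) := by
  have hkj' : k < j := by omega
  have cop23 : Nat.Coprime (2 ^ k) (3 ^ k) := (by decide : Nat.Coprime 2 3).pow k k
  -- iterates before k are odd
  have hodd1 : ∀ i, 0 ≤ i → i < k → T^[i] n % 2 = 1 := by
    intro i _ hik
    have := hpar i (by omega)
    omega
  have hch1 := chain n 0 k hodd1 k (by omega)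
  simp only [Nat.zero_add, Function.iterate_zero, id_eq] at hch1
  -- 2^k ∣ n + 1
  have hdvd : 2 ^ k ∣ n + 1 := by
    have h1 : 2 ^ k ∣ 3 ^ k * (n + 1) := ⟨_, hch1.symm⟩
    exact (Nat.Coprime.dvd_of_dvd_mul_left cop23 h1)
  obtain ⟨A, hA⟩ := hdvd
  have hAdiv : (n + 1) / 2 ^ k = A := by rw [hA]; exact Nat.mul_div_cancel_left _ (by positivity)
  -- T^[k] n + 1 = 3^k * A
  have hTk : T^[k] n + 1 = 3 ^ k * A := by
    have : 2 ^ k * (T^[k] n + 1) = 2 ^ k * (3 ^ k * A) := by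
      rw [hch1, hA]; ring
    exact Nat.eq_of_mul_eq_mul_left (by positivity) this
  -- T^[k] n is even
  have hTke : T^[k] n % 2 = 0 := (hpar k hkj').2 rfl
  -- T^[k+1] n = T^[k] n / 2
  have hTk1 : T^[k + 1] n = T^[k] n / 2 := by
    rw [Function.iterate_succ_apply']
    simp [T, hTke, show ¬ (T^[k] n % 2 = 1) by omega]
  -- iterates from k+1 to j-1 are odd
  have hodd2 : ∀ i, k + 1 ≤ i → i < j → T^[i] n % 2 = 1 := by
    intro i hi hij
    have := hpar i hij
    omega
  have hch2 := chain n (k + 1) j hodd2 (j - (k + 1)) (by omega)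
  rw [show k + 1 + (j - (k + 1)) = j from by omega] at hch2
  -- 2^(j-k-1) ∣ T^[k+1] n + 1
  have hd2 : 2 ^ (j - (k + 1)) ∣ T^[k + 1] n + 1 := by
    have h1 : 2 ^ (j - (k + 1)) ∣ 3 ^ (j - (k + 1)) * (T^[k + 1] n + 1) := ⟨_, hch2.symm⟩
    exact Nat.Coprime.dvd_of_dvd_mul_left
      ((by decide : Nat.Coprime 2 3).pow _ _) h1
  obtain ⟨C, hC⟩ := hd2
  have hkey : 1 + 3 ^ k * A = 2 ^ (j - k) * C := by
    have h2 : T^[k] n = 2 * (T^[k] n / 2) := by omega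
    have h3 : 2 ^ (j - k) = 2 * 2 ^ (j - (k + 1)) := by
      rw [← pow_succ']
      congr 1
      omega
    calc 1 + 3 ^ k * A = T^[k] n + 2 := by omega
      _ = 2 * (T^[k + 1] n + 1) := by rw [hTk1]; omega
      _ = 2 * (2 ^ (j - (k + 1)) * C) := by rw [hC]
      _ = 2 ^ (j - k) * C := by rw [h3]; ring
  refine ⟨⟨A, hA⟩, C, ?_, ?_, ?_⟩
  · rcases Nat.eq_zero_or_pos C with h | h
    · simp [h] at hkey
    · exact h
  · rw [hAdiv]; exact hkey
  · rw [hAdiv, ← hkey, Nat.add_comm 1]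
    rw [show 3 ^ k * A + 1 = 1 + 3 ^ k * A from by omega, Nat.add_comm 1]
    simpa using (by rw [Nat.add_comm]; simp [Nat.coprime_add_self_right] :
      Nat.Coprime (3 ^ k * A) (3 ^ k * A + 1))
end

section
/- Assume the abc conjecture. Then for every ε > 0 there exists K(ε) > 0 such that for all j ≥ 2 and every positive integer n < 2^j whose Collatz iterates n, T(n), …, T^{j−1}(n) contain exactly one even term, n ≥ K(ε)·2^{(1−ε)j}. -/
/-- The radical of a positive integer: the product of its distinct prime factors. -/
def rad (n : ℕ) : ℕ := n.primeFactors.prod id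

/-- The abc conjecture: for every ε > 0 there are only finitely many coprime triples
(a,b,c) with a + b = c and c > rad(abc)^(1+ε). -/
def AbcConjecture : Prop :=
  ∀ ε : ℝ, 0 < ε →
    {t : ℕ × ℕ × ℕ | 0 < t.1 ∧ 0 < t.2.1 ∧ 0 < t.2.2 ∧ Nat.Coprime t.1 t.2.1 ∧
      t.1 + t.2.1 = t.2.2 ∧
      ((rad (t.1 * t.2.1 * t.2.2) : ℝ)) ^ ((1 : ℝ) + ε) < (t.2.2 : ℝ)}.Finite

lemma rad_pos (n : ℕ) : 0 < rad n :=
  Finset.prod_pos fun p hp => (Nat.prime_of_mem_primeFactors hp).pos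

lemma rad_le_self (n : ℕ) (hn : n ≠ 0) : rad n ≤ n :=
  Nat.le_of_dvd (Nat.pos_of_ne_zero hn) (Nat.prod_primeFactors_dvd n)

lemma rad_mul_le (u v : ℕ) (hu : u ≠ 0) (hv : v ≠ 0) : rad (u * v) ≤ rad u * rad v := by
  have h : rad (u * v) ∣ rad u * rad v := by
    unfold rad
    rw [Nat.primeFactors_mul hu hv]
    rw [← Finset.union_sdiff_self_eq_union, Finset.prod_union Finset.disjoint_sdiff]
    exact mul_dvd_mul_left _ (Finset.prod_dvd_prod_of_subset _ _ _ (Finset.sdiff_subset))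
  exact Nat.le_of_dvd (Nat.mul_pos (rad_pos u) (rad_pos v)) h

lemma rad_pow_le (p k : ℕ) (hp : 0 < p) : rad (p ^ k) ≤ p := by
  cases k with
  | zero => simpa [rad] using Nat.succ_le_of_lt hp
  | succ k =>
    unfold rad
    rw [Nat.primeFactors_pow_succ]
    exact rad_le_self p hp.ne'

lemma key_iter (n k : ℕ) (h : ∀ i < k, T^[i] n % 2 = 1) :
    2 ^ k * (T^[k] n + 1) = 3 ^ k * (n + 1) := by
  induction k with
  | zero => simp
  | succ k ih =>
    have h2 := ih fun i hi => h i (by omega)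
    have hm : T^[k] n % 2 = 1 := h k (by omega)
    rw [Function.iterate_succ_apply']
    set m := T^[k] n with hmdef
    have hT : 2 * T m = 3 * m + 1 := by
      unfold T; rw [if_pos hm]; omega
    have e1 : 2 ^ (k+1) * (T m + 1) = 2 ^ k * (2 * T m + 2) := by ring
    rw [e1, hT]
    have e2 : 3 * m + 1 + 2 = 3 * (m + 1) := by ring
    rw [e2]
    calc 2 ^ k * (3 * (m+1)) = 3 * (2 ^ k * (m+1)) := by ring
    _ = 3 * (3 ^ k * (n+1)) := by rw [h2]
    _ = 3 ^ (k+1) * (n+1) := by ring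

lemma abc_const (habc : AbcConjecture) (ε' : ℝ) (hε' : 0 < ε') :
    ∃ C : ℝ, 1 ≤ C ∧ ∀ a b c : ℕ, 0 < a → 0 < b → 0 < c → Nat.Coprime a b → a + b = c →
      (c : ℝ) ≤ C * (rad (a * b * c) : ℝ) ^ ((1:ℝ) + ε') := by
  obtain hfin := habc ε' hε'
  obtain ⟨C₀, hC₀⟩ := (hfin.image (fun t => (t.2.2 : ℝ))).bddAbove
  refine ⟨max C₀ 1, le_max_right _ _, ?_⟩
  intro a b c ha hb hc hcop hsum
  have hrad1 : (1:ℝ) ≤ (rad (a*b*c) : ℝ) := by exact_mod_cast rad_pos _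
  have hrpow1 : (1:ℝ) ≤ (rad (a*b*c) : ℝ) ^ ((1:ℝ)+ε') :=
    Real.one_le_rpow hrad1 (by linarith)
  by_cases hx : ((rad (a*b*c) : ℝ)) ^ ((1:ℝ) + ε') < (c : ℝ)
  · have hmem : ((a,b,c) : ℕ×ℕ×ℕ) ∈ {t : ℕ × ℕ × ℕ | 0 < t.1 ∧ 0 < t.2.1 ∧ 0 < t.2.2 ∧
        Nat.Coprime t.1 t.2.1 ∧ t.1 + t.2.1 = t.2.2 ∧
        ((rad (t.1 * t.2.1 * t.2.2) : ℝ)) ^ ((1 : ℝ) + ε') < (t.2.2 : ℝ)} :=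
      ⟨ha, hb, hc, hcop, hsum, hx⟩
    have h1 : (c:ℝ) ≤ C₀ := hC₀ (Set.mem_image_of_mem _ hmem)
    calc (c:ℝ) ≤ C₀ := h1
      _ ≤ max C₀ 1 := le_max_left _ _
      _ = max C₀ 1 * 1 := (mul_one _).symm
      _ ≤ max C₀ 1 * ((rad (a*b*c) : ℝ) ^ ((1:ℝ)+ε')) := by
          apply mul_le_mul_of_nonneg_left hrpow1
          exact le_trans zero_le_one (le_max_right _ _)
  · push_neg at hx
    calc (c:ℝ) ≤ (rad (a*b*c) : ℝ) ^ ((1:ℝ)+ε') := hx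
      _ = 1 * _ := (one_mul _).symm
      _ ≤ max C₀ 1 * ((rad (a*b*c) : ℝ) ^ ((1:ℝ)+ε')) := by
          apply mul_le_mul_of_nonneg_right (le_max_right _ _) (by positivity)

set_option maxHeartbeats 2000000 in
theorem stmt_13 (habc : AbcConjecture) :
    ∀ ε : ℝ, 0 < ε → ∃ K : ℝ, 0 < K ∧
      ∀ j n : ℕ, 2 ≤ j → 0 < n → n < 2 ^ j →
        ((Finset.range j).filter (fun i => (T^[i] n) % 2 = 0)).card = 1 →
        K * (2 : ℝ) ^ ((1 - ε) * (j : ℝ)) ≤ (n : ℝ) := by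
  intro ε hε
  obtain ⟨δ, hδε, hδ1, hδ⟩ : ∃ δ : ℝ, δ ≤ ε ∧ δ ≤ 1 ∧ 0 < δ :=
    ⟨min ε 1, min_le_left _ _, min_le_right _ _, lt_min hε one_pos⟩
  obtain ⟨ε', hε', hq1⟩ : ∃ ε' : ℝ, 0 < ε' ∧ (1 - δ) * (1 + 2 * ε') ≤ 1 :=
    ⟨δ / 4, by positivity, by nlinarith [sq_nonneg δ]⟩
  obtain ⟨C, hC1, habc'⟩ := abc_const habc ε' hε'
  have hC0 : (0:ℝ) < C := lt_of_lt_of_le one_pos hC1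
  set p : ℝ := 1 + ε' with hpdef
  set q : ℝ := 1 + 2 * ε' with hqdef
  have hp0 : (0:ℝ) < p := by rw [hpdef]; linarith
  have hq0 : (0:ℝ) < q := by rw [hqdef]; linarith
  set D : ℝ := C * (6:ℝ) ^ p * (2:ℝ) ^ ε' with hDdef
  have hD0 : (0:ℝ) < D := by
    rw [hDdef]
    positivity
  set K := min (1/4 : ℝ) ((2 * D ^ (1/q))⁻¹) with hKdef
  have hK0 : 0 < K := by
    apply lt_min (by norm_num)
    rw [inv_pos]
    positivity
  refine ⟨K, hK0, ?_⟩
  intro j n hj hn hnj hcard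
  obtain ⟨k, hk⟩ := Finset.card_eq_one.mp hcard
  have hkmem : k < j ∧ T^[k] n % 2 = 0 := by
    have h : k ∈ ({k} : Finset ℕ) := Finset.mem_singleton_self k
    rw [← hk, Finset.mem_filter, Finset.mem_range] at h
    exact h
  have hkj : k < j := hkmem.1
  have hodd : ∀ i, i < j → i ≠ k → T^[i] n % 2 = 1 := by
    intro i hij hik
    by_contra hcon
    have h0 : T^[i] n % 2 = 0 := by omega
    have h : i ∈ ({k} : Finset ℕ) := by
      rw [← hk]; exact Finset.mem_filter.mpr ⟨Finset.mem_range.mpr hij, h0⟩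
    exact hik (Finset.mem_singleton.mp h)
  have hA := key_iter n k (fun i hi => hodd i (by omega) (by omega))
  have h23 : Nat.Coprime 2 3 := by decide
  have hcop23 : ∀ s t : ℕ, Nat.Coprime (2 ^ s) (3 ^ t) := fun s t => Nat.Coprime.pow s t h23
  have hdvd : 2 ^ k ∣ n + 1 := by
    have h1 : (2:ℕ) ^ k ∣ 3 ^ k * (n+1) := ⟨_, hA.symm⟩
    exact (Nat.Coprime.dvd_of_dvd_mul_left (hcop23 k k) h1)
  obtain ⟨a, hadef⟩ := hdvd
  have ha1 : 1 ≤ a := by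
    rcases Nat.eq_zero_or_pos a with h | h
    · rw [h, mul_zero] at hadef; omega
    · exact h
  have hm1 : T^[k] n + 1 = 3 ^ k * a := by
    have h2 : 2 ^ k * (T^[k] n + 1) = 2 ^ k * (3 ^ k * a) := by
      rw [hA, hadef]; ring
    exact Nat.eq_of_mul_eq_mul_left (by positivity : 0 < 2 ^ k) h2
  by_cases hcase : k = j - 1
  · -- easy case: n + 1 = 2^(j-1) * a ≥ 2^(j-1), so n ≥ 2^(j-2)
    have hn1 : 2 ^ (j-1) ≤ n + 1 := by
      rw [hadef, hcase]
      exact Nat.le_mul_of_pos_right _ ha1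
    have hpow : 2 ^ (j-1) = 2 * 2 ^ (j-2) := by
      rw [← pow_succ']
      congr 1
      omega
    have hone : 1 ≤ 2 ^ (j-2) := Nat.one_le_two_pow
    have hnge : 2 ^ (j-2) ≤ n := by omega
    have hcast : ((2:ℝ)) ^ ((j:ℕ):ℝ) = ((2 ^ j : ℕ) : ℝ) := by
      rw [Real.rpow_natCast]; push_cast; ring
    have hjsplit : (2:ℕ) ^ j = 4 * 2 ^ (j - 2) := by
      have h : j - 2 + 2 = j := by omega
      calc (2:ℕ) ^ j = 2 ^ (j - 2 + 2) := by rw [h]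
        _ = 4 * 2 ^ (j - 2) := by rw [pow_add]; ring
    calc K * (2:ℝ) ^ ((1 - ε) * (j:ℝ))
        ≤ (1/4) * (2:ℝ) ^ ((j:ℕ):ℝ) := by
          apply mul_le_mul (min_le_left _ _)
          · apply Real.rpow_le_rpow_of_exponent_le one_le_two
            have h1 : (0:ℝ) ≤ ε * (j:ℝ) := mul_nonneg hε.le (Nat.cast_nonneg j)
            ring_nf
            ring_nf at h1
            linarith [h1]
          · positivity
          · norm_num
      _ = ((2 ^ (j-2) : ℕ) : ℝ) := by
          rw [hcast, hjsplit]; push_cast; ring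
      _ ≤ (n:ℝ) := by exact_mod_cast hnge
  · -- main case: k ≤ j - 2
    obtain ⟨r, hr⟩ : ∃ r, j = k + r + 2 := ⟨j - k - 2, by omega⟩
    set m' := T^[k+1] n with hm'def
    have hiter : ∀ s, T^[s] m' = T^[s + (k+1)] n := fun s => by
      rw [hm'def, ← Function.iterate_add_apply]
    have hB := key_iter m' (r+1) (fun s hs => by
      rw [hiter s]; exact hodd (s + (k+1)) (by omega) (by omega))
    have hdvd2 : 2 ^ (r+1) ∣ m' + 1 := by
      have h1 : (2:ℕ) ^ (r+1) ∣ 3 ^ (r+1) * (m'+1) := ⟨_, hB.symm⟩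
      exact Nat.Coprime.dvd_of_dvd_mul_left (hcop23 (r+1) (r+1)) h1
    have hTm : 2 * m' = T^[k] n := by
      have h : m' = T (T^[k] n) := by rw [hm'def, Function.iterate_succ_apply']
      have he : T^[k] n % 2 = 0 := hkmem.2
      rw [h]
      generalize T^[k] n = M at he ⊢
      unfold T
      rw [if_neg (by omega)]
      omega
    have h2m : 2 * (m' + 1) = 3 ^ k * a + 1 := by
      rw [← hm1, ← hTm]; ring
    have hdvd3 : 2 ^ (r+2) ∣ 3 ^ k * a + 1 := by
      obtain ⟨b, hb⟩ := hdvd2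
      exact ⟨b, by rw [← h2m, hb]; ring⟩
    obtain ⟨b, hbdef⟩ := hdvd3
    have hb1 : 1 ≤ b := by
      rcases Nat.eq_zero_or_pos b with h | h
      · rw [h, mul_zero] at hbdef; omega
      · exact h
    have hx1 : 1 ≤ 3 ^ k * a := Nat.one_le_iff_ne_zero.mpr (by positivity)
    have habcapp := habc' 1 (3^k*a) (3^k*a+1) one_pos hx1 (Nat.succ_pos _)
      (Nat.coprime_one_left _) (by ring)
    have hradb : rad (1 * (3^k*a) * (3^k*a+1)) ≤ 6 * (a * b) := by
      rw [one_mul]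
      calc rad ((3^k*a) * (3^k*a+1))
          ≤ rad (3^k*a) * rad (3^k*a+1) := rad_mul_le _ _ (by omega) (by omega)
        _ ≤ (rad (3^k) * rad a) * (rad (2^(r+2)) * rad b) := by
            apply Nat.mul_le_mul
            · exact rad_mul_le _ _ (by positivity) (by omega)
            · rw [hbdef]; exact rad_mul_le _ _ (by positivity) (by omega)
        _ ≤ (3 * a) * (2 * b) := by
            apply Nat.mul_le_mul
            · exact Nat.mul_le_mul (rad_pow_le 3 k (by norm_num)) (rad_le_self a (by omega))
            · exact Nat.mul_le_mul (rad_pow_le 2 (r+2) (by norm_num)) (rad_le_self b (by omega))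
        _ = 6 * (a * b) := by ring
    -- real-number chain
    have h2R : (0:ℝ) ≤ 2 := by norm_num
    have haR : (1:ℝ) ≤ (a:ℝ) := by exact_mod_cast ha1
    have haP : (0:ℝ) < (a:ℝ) := by linarith
    have hbR : (1:ℝ) ≤ (b:ℝ) := by exact_mod_cast hb1
    have hbP : (0:ℝ) < (b:ℝ) := by linarith
    have hYP : (0:ℝ) < (3:ℝ)^k * (a:ℝ) + 1 := by positivity
    have hEP : (0:ℝ) < (2:ℝ)^(r+2) := by positivity
    have habcR : (3:ℝ)^k * (a:ℝ) + 1 ≤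
        C * ((rad (1*(3^k*a)*(3^k*a+1)) : ℕ):ℝ)^p := by
      push_cast at habcapp
      convert habcapp using 2 <;> push_cast <;> ring
    have hbeq : (3:ℝ)^k * (a:ℝ) + 1 = (2:ℝ)^(r+2) * (b:ℝ) := by exact_mod_cast hbdef
    have hadR : ((n:ℝ)+1) = (2:ℝ)^k * (a:ℝ) := by exact_mod_cast hadef
    have hradR : ((rad (1*(3^k*a)*(3^k*a+1)) : ℕ):ℝ) ≤ 6*((a:ℝ)*(b:ℝ)) := by
      exact_mod_cast hradb
    have hstep1 : (3:ℝ)^k * (a:ℝ) + 1 ≤ C * (6*((a:ℝ)*(b:ℝ)))^p := by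
      refine le_trans habcR ?_
      apply mul_le_mul_of_nonneg_left ?_ hC0.le
      exact Real.rpow_le_rpow (by positivity) hradR hp0.le
    have hBeq : (b:ℝ) = ((3:ℝ)^k * (a:ℝ) + 1) / (2:ℝ)^(r+2) := by
      rw [hbeq]; field_simp
    have hstep2 : (6*((a:ℝ)*(b:ℝ)))^p
        = 6^p * (a:ℝ)^p * (((3:ℝ)^k * (a:ℝ) + 1)^p / ((2:ℝ)^(r+2))^p) := by
      rw [hBeq, Real.mul_rpow (by norm_num) (by positivity),
        Real.mul_rpow haP.le (by positivity), Real.div_rpow hYP.le hEP.le]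
      ring
    have hYp : ((3:ℝ)^k * (a:ℝ) + 1)^p = ((3:ℝ)^k * (a:ℝ) + 1) * ((3:ℝ)^k * (a:ℝ) + 1)^ε' := by
      rw [hpdef, Real.rpow_add hYP, Real.rpow_one]
    have hstep3 : ((2:ℝ)^(r+2))^p ≤ C * 6^p * (a:ℝ)^p * ((3:ℝ)^k * (a:ℝ) + 1)^ε' := by
      have hEpP : (0:ℝ) < ((2:ℝ)^(r+2))^p := by positivity
      have h1 : ((3:ℝ)^k * (a:ℝ) + 1) * ((2:ℝ)^(r+2))^p
          ≤ C * 6^p * (a:ℝ)^p * ((3:ℝ)^k * (a:ℝ) + 1)^p := by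
        calc ((3:ℝ)^k * (a:ℝ) + 1) * ((2:ℝ)^(r+2))^p
            ≤ (C * (6*((a:ℝ)*(b:ℝ)))^p) * ((2:ℝ)^(r+2))^p :=
              mul_le_mul_of_nonneg_right hstep1 hEpP.le
          _ = (C * (6^p * (a:ℝ)^p * (((3:ℝ)^k * (a:ℝ) + 1)^p / ((2:ℝ)^(r+2))^p)))
                * ((2:ℝ)^(r+2))^p := by rw [hstep2]
          _ = C * 6^p * (a:ℝ)^p * ((3:ℝ)^k * (a:ℝ) + 1)^p := by field_simp
      rw [hYp] at h1
      have h2 : ((2:ℝ)^(r+2))^p * ((3:ℝ)^k * (a:ℝ) + 1)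
          ≤ (C * 6^p * (a:ℝ)^p * ((3:ℝ)^k * (a:ℝ) + 1)^ε') * ((3:ℝ)^k * (a:ℝ) + 1) := by
        calc ((2:ℝ)^(r+2))^p * ((3:ℝ)^k * (a:ℝ) + 1)
            = ((3:ℝ)^k * (a:ℝ) + 1) * ((2:ℝ)^(r+2))^p := by ring
          _ ≤ C * 6^p * (a:ℝ)^p * (((3:ℝ)^k * (a:ℝ) + 1) * ((3:ℝ)^k * (a:ℝ) + 1)^ε') := h1
          _ = (C * 6^p * (a:ℝ)^p * ((3:ℝ)^k * (a:ℝ) + 1)^ε') * ((3:ℝ)^k * (a:ℝ) + 1) := by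
              ring
      exact le_of_mul_le_mul_right h2 hYP
    have hYleN : 3^k*a+1 ≤ 2*(4^k*a) := by
      calc 3^k*a+1 ≤ 3^k*a + 3^k*a := by omega
        _ = 2*(3^k*a) := by ring
        _ ≤ 2*(4^k*a) :=
            Nat.mul_le_mul_left 2 (Nat.mul_le_mul_right a (Nat.pow_le_pow_left (by norm_num) k))
    have hYleR : (3:ℝ)^k * (a:ℝ) + 1 ≤ 2*((4:ℝ)^k*(a:ℝ)) := by exact_mod_cast hYleN
    have hstep4 : ((3:ℝ)^k * (a:ℝ) + 1)^ε' ≤ 2^ε' * ((4:ℝ)^k)^ε' * ((a:ℝ))^ε' := by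
      calc ((3:ℝ)^k * (a:ℝ) + 1)^ε' ≤ (2*((4:ℝ)^k*(a:ℝ)))^ε' :=
            Real.rpow_le_rpow hYP.le hYleR hε'.le
        _ = 2^ε' * ((4:ℝ)^k)^ε' * ((a:ℝ))^ε' := by
            rw [Real.mul_rpow h2R (by positivity), Real.mul_rpow (by positivity) haP.le]
            ring
    have hpq : p + ε' = q := by rw [hpdef, hqdef]; ring
    have hstep5 : ((2:ℝ)^(r+2))^p ≤ D * ((4:ℝ)^k)^ε' * ((a:ℝ))^q := by
      calc ((2:ℝ)^(r+2))^p
          ≤ C * 6^p * (a:ℝ)^p * (2^ε' * ((4:ℝ)^k)^ε' * ((a:ℝ))^ε') :=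
            le_trans hstep3 (mul_le_mul_of_nonneg_left hstep4 (by positivity))
        _ = D * ((4:ℝ)^k)^ε' * ((a:ℝ)^p * (a:ℝ)^ε') := by rw [hDdef]; ring
        _ = D * ((4:ℝ)^k)^ε' * ((a:ℝ))^q := by rw [← Real.rpow_add haP, hpq]
    have hstep6 : ((2:ℝ)^k)^q * ((2:ℝ)^(r+2))^p ≤ D * ((4:ℝ)^k)^ε' * ((n:ℝ)+1)^q := by
      have hnq : ((n:ℝ)+1)^q = ((2:ℝ)^k)^q * ((a:ℝ))^q := by
        rw [hadR, Real.mul_rpow (by positivity) haP.le]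
      calc ((2:ℝ)^k)^q * ((2:ℝ)^(r+2))^p
          ≤ ((2:ℝ)^k)^q * (D * ((4:ℝ)^k)^ε' * ((a:ℝ))^q) :=
            mul_le_mul_of_nonneg_left hstep5 (by positivity)
        _ = D * ((4:ℝ)^k)^ε' * (((2:ℝ)^k)^q * ((a:ℝ))^q) := by ring
        _ = D * ((4:ℝ)^k)^ε' * ((n:ℝ)+1)^q := by rw [hnq]
    have hF : ((2:ℝ)^k)^q = (2:ℝ)^((k:ℝ)*q) := by
      rw [← Real.rpow_natCast 2 k, ← Real.rpow_mul h2R]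
    have hE : ((2:ℝ)^(r+2))^p = (2:ℝ)^(((r:ℝ)+2)*p) := by
      rw [← Real.rpow_natCast 2 (r+2), ← Real.rpow_mul h2R]
      push_cast
      ring_nf
    have hG : ((4:ℝ)^k)^ε' = (2:ℝ)^((2*(k:ℝ))*ε') := by
      have h4 : (4:ℝ)^k = (2:ℝ)^(2*k) := by
        rw [show (4:ℝ) = 2^2 by norm_num, ← pow_mul]
      rw [h4, ← Real.rpow_natCast 2 (2*k), ← Real.rpow_mul h2R]
      push_cast
      ring_nf
    have hjr : (j:ℝ) = (k:ℝ) + (r:ℝ) + 2 := by exact_mod_cast hr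
    have hexp : (j:ℝ) + (2*(k:ℝ))*ε' ≤ (k:ℝ)*q + ((r:ℝ)+2)*p := by
      have h1 : (0:ℝ) ≤ ((r:ℝ)+2) * ε' := by positivity
      rw [hjr, hqdef, hpdef]
      ring_nf
      ring_nf at h1
      linarith [h1]
    have hstep7 : (2:ℝ)^((j:ℝ)) * ((4:ℝ)^k)^ε' ≤ ((2:ℝ)^k)^q * ((2:ℝ)^(r+2))^p := by
      rw [hF, hE, hG, ← Real.rpow_add two_pos, ← Real.rpow_add two_pos]
      exact Real.rpow_le_rpow_of_exponent_le one_le_two hexp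
    have hfinal1 : (2:ℝ)^((j:ℝ)) ≤ D * ((n:ℝ)+1)^q := by
      have hGpos : (0:ℝ) < ((4:ℝ)^k)^ε' := by positivity
      refine le_of_mul_le_mul_right ?_ hGpos
      calc (2:ℝ)^((j:ℝ)) * ((4:ℝ)^k)^ε'
          ≤ ((2:ℝ)^k)^q * ((2:ℝ)^(r+2))^p := hstep7
        _ ≤ D * ((4:ℝ)^k)^ε' * ((n:ℝ)+1)^q := hstep6
        _ = D * ((n:ℝ)+1)^q * ((4:ℝ)^k)^ε' := by ring
    have hfinal2 : ((2:ℝ)^((j:ℝ))/D)^(1/q) ≤ (n:ℝ)+1 := by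
      have h1 : (2:ℝ)^((j:ℝ))/D ≤ ((n:ℝ)+1)^q := by
        rw [div_le_iff₀ hD0]
        calc (2:ℝ)^((j:ℝ)) ≤ D * ((n:ℝ)+1)^q := hfinal1
          _ = ((n:ℝ)+1)^q * D := by ring
      have h2' := Real.rpow_le_rpow (by positivity) h1 (by positivity : (0:ℝ) ≤ 1/q)
      rwa [← Real.rpow_mul (by positivity), mul_one_div, div_self hq0.ne',
        Real.rpow_one] at h2'
    have hsplit : ((2:ℝ)^((j:ℝ))/D)^(1/q) = ((2:ℝ)^((j:ℝ)))^(1/q) / D^(1/q) :=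
      Real.div_rpow (by positivity) hD0.le _
    have hmono : (2:ℝ)^((1-ε)*(j:ℝ)) ≤ ((2:ℝ)^((j:ℝ)))^(1/q) := by
      rw [← Real.rpow_mul h2R]
      apply Real.rpow_le_rpow_of_exponent_le one_le_two
      have hj0 : (0:ℝ) ≤ (j:ℝ) := Nat.cast_nonneg j
      have hkey : (1-ε) ≤ 1/q := by
        have h1 : (1-δ)*q ≤ 1 := by
          rw [hqdef]; exact hq1
        have h2'' : (1-δ) ≤ 1/q := by
          rw [le_div_iff₀ hq0]
          exact h1
        linarith
      calc (1-ε)*(j:ℝ) ≤ (1/q)*(j:ℝ) := mul_le_mul_of_nonneg_right hkey hj0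
        _ = (j:ℝ)*(1/q) := by ring
    have hDq : (0:ℝ) < D^(1/q) := by positivity
    have hchain : (2:ℝ)^((1-ε)*(j:ℝ)) / D^(1/q) ≤ (n:ℝ)+1 := by
      refine le_trans ?_ hfinal2
      rw [hsplit]
      gcongr
    have hn1 : (1:ℝ) ≤ (n:ℝ) := by exact_mod_cast hn
    calc K * (2:ℝ)^((1-ε)*(j:ℝ))
        ≤ (2*D^(1/q))⁻¹ * (2:ℝ)^((1-ε)*(j:ℝ)) :=
          mul_le_mul_of_nonneg_right (min_le_right _ _) (by positivity)
      _ = ((2:ℝ)^((1-ε)*(j:ℝ)) / D^(1/q)) / 2 := by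
          rw [mul_inv]
          ring
      _ ≤ ((n:ℝ)+1)/2 := by linarith [hchain]
      _ ≤ (n:ℝ) := by linarith
end

section
/- Let p₁, …, p_k be distinct Wieferich primes (primes p with p² ∣ 2^{p−1} − 1) and L = lcm(p₁−1, …, p_k−1). Then g(1, 2^L−1, 2^L) > log(p₁⋯p_k / (2^{k+1}·L)), where g(a,b,c) = log c − μ(abc). -/
private lemma mu_eq (μ : ℕ → ℝ)
    (hμp : ∀ p n : ℕ, p.Prime → 0 < n → μ (p ^ n) = Real.log p + Real.log n)
    (hμmul : ∀ m n : ℕ, 0 < m → 0 < n → Nat.Coprime m n → μ (m * n) = μ m + μ n) :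
    ∀ n : ℕ, 0 < n →
      μ n = ∑ q ∈ n.primeFactors, (Real.log q + Real.log (n.factorization q)) := by
  have h1 : μ 1 = 0 := by
    have := hμmul 1 1 one_pos one_pos (Nat.coprime_one_left 1)
    simp only [mul_one] at this
    linarith
  intro n
  induction n using Nat.recOnPosPrimePosCoprime with
  | prime_pow q a hq ha =>
    intro _
    rw [Nat.primeFactors_prime_pow ha.ne' hq, Finset.sum_singleton,
      hq.factorization_pow, Finsupp.single_eq_same, hμp q a hq ha]
  | zero => intro h; exact absurd h (lt_irrefl 0)
  | one => intro _; simp [h1]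
  | coprime a b ha hb hab iha ihb =>
    intro _
    have ha0 : a ≠ 0 := by omega
    have hb0 : b ≠ 0 := by omega
    rw [hμmul a b (by omega) (by omega) hab, iha (by omega), ihb (by omega),
      Nat.primeFactors_mul ha0 hb0, Finset.sum_union hab.disjoint_primeFactors]
    congr 1
    · refine Finset.sum_congr rfl fun q hq => ?_
      have hfb : b.factorization q = 0 := by
        refine Nat.factorization_eq_zero_of_not_dvd fun hd => ?_
        have hq1 : q.Prime := Nat.prime_of_mem_primeFactors hq
        have : q ∣ Nat.gcd a b := Nat.dvd_gcd (Nat.dvd_of_mem_primeFactors hq) hd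
        rw [hab] at this
        exact hq1.ne_one (Nat.eq_one_of_dvd_one this)
      rw [Nat.factorization_mul ha0 hb0]
      simp [hfb]
    · refine Finset.sum_congr rfl fun q hq => ?_
      have hfa : a.factorization q = 0 := by
        refine Nat.factorization_eq_zero_of_not_dvd fun hd => ?_
        have hq1 : q.Prime := Nat.prime_of_mem_primeFactors hq
        have : q ∣ Nat.gcd a b := Nat.dvd_gcd hd (Nat.dvd_of_mem_primeFactors hq)
        rw [hab] at this
        exact hq1.ne_one (Nat.eq_one_of_dvd_one this)
      rw [Nat.factorization_mul ha0 hb0]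
      simp [hfa]

private lemma mu_le (μ : ℕ → ℝ)
    (hμp : ∀ p n : ℕ, p.Prime → 0 < n → μ (p ^ n) = Real.log p + Real.log n)
    (hμmul : ∀ m n : ℕ, 0 < m → 0 < n → Nat.Coprime m n → μ (m * n) = μ m + μ n)
    (n : ℕ) (hn : 0 < n) (S : Finset ℕ) (hS : ∀ q ∈ S, q.Prime ∧ q ^ 2 ∣ n) :
    μ n ≤ Real.log n - ∑ q ∈ S, Real.log q + S.card * Real.log 2 := by
  have hSsub : S ⊆ n.primeFactors := by
    intro q hq
    exact Nat.mem_primeFactors.mpr ⟨(hS q hq).1,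
      dvd_trans (dvd_pow_self q two_ne_zero) (hS q hq).2, hn.ne'⟩
  have hlog : Real.log n = ∑ q ∈ n.primeFactors, (n.factorization q : ℝ) * Real.log q := by
    conv_lhs => rw [← Nat.factorization_prod_pow_eq_self hn.ne']
    rw [Finsupp.prod, Nat.support_factorization, Nat.cast_prod, Real.log_prod]
    · exact Finset.sum_congr rfl fun q hq => by rw [Nat.cast_pow, Real.log_pow]
    · intro q hq
      have := (Nat.prime_of_mem_primeFactors hq).pos
      positivity
  have key : ∀ q ∈ n.primeFactors,
      Real.log q + Real.log (n.factorization q) ≤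
      (n.factorization q : ℝ) * Real.log q -
        (if q ∈ S then Real.log q - Real.log 2 else 0) := by
    intro q hq
    have hqp : q.Prime := Nat.prime_of_mem_primeFactors hq
    have hq2 : (2 : ℝ) ≤ q := by exact_mod_cast hqp.two_le
    set a := n.factorization q with hadef
    have ha1 : 1 ≤ a := hqp.factorization_pos_of_dvd hn.ne' (Nat.dvd_of_mem_primeFactors hq)
    by_cases hqS : q ∈ S
    · have ha2 : 2 ≤ a := (hqp.pow_dvd_iff_le_factorization hn.ne').mp (hS q hqS).2
      have hle : a ≤ 2 * q ^ (a - 2) := by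
        have h1 : a - 1 < 2 ^ (a - 1) := Nat.lt_two_pow_self
        have h2 : 2 ^ (a - 1) = 2 * 2 ^ (a - 2) := by
          rw [← pow_succ']
          congr 1
          omega
        have h3 : 2 ^ (a - 2) ≤ q ^ (a - 2) := Nat.pow_le_pow_left hqp.two_le _
        omega
      have hloga : Real.log a ≤ Real.log 2 + (a - 2 : ℕ) * Real.log q := by
        have := Real.log_le_log (by exact_mod_cast Nat.lt_of_lt_of_le Nat.zero_lt_one ha1)
          (show (a : ℝ) ≤ 2 * (q : ℝ) ^ (a - 2) by exact_mod_cast hle)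
        rwa [Real.log_mul two_ne_zero (by positivity), Real.log_pow] at this
      simp only [hqS, if_true]
      have hcast : ((a - 2 : ℕ) : ℝ) = (a : ℝ) - 2 := by
        push_cast [ha2]; ring
      rw [hcast] at hloga
      nlinarith [Real.log_nonneg (by linarith : (1:ℝ) ≤ q)]
    · have hle : a ≤ q ^ (a - 1) := by
        have h1 : a - 1 < 2 ^ (a - 1) := Nat.lt_two_pow_self
        have h3 : 2 ^ (a - 1) ≤ q ^ (a - 1) := Nat.pow_le_pow_left hqp.two_le _
        omega
      have hloga : Real.log a ≤ (a - 1 : ℕ) * Real.log q := by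
        have := Real.log_le_log (by exact_mod_cast Nat.lt_of_lt_of_le Nat.zero_lt_one ha1)
          (show (a : ℝ) ≤ (q : ℝ) ^ (a - 1) by exact_mod_cast hle)
        rwa [Real.log_pow] at this
      simp only [hqS, if_false]
      have hcast : ((a - 1 : ℕ) : ℝ) = (a : ℝ) - 1 := by
        push_cast [ha1]; ring
      rw [hcast] at hloga
      nlinarith
  calc μ n = ∑ q ∈ n.primeFactors, (Real.log q + Real.log (n.factorization q)) :=
        mu_eq μ hμp hμmul n hn
    _ ≤ ∑ q ∈ n.primeFactors, ((n.factorization q : ℝ) * Real.log q -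
          (if q ∈ S then Real.log q - Real.log 2 else 0)) := Finset.sum_le_sum key
    _ = (∑ q ∈ n.primeFactors, (n.factorization q : ℝ) * Real.log q) -
          ∑ q ∈ n.primeFactors, (if q ∈ S then Real.log q - Real.log 2 else 0) :=
        Finset.sum_sub_distrib _ _
    _ = Real.log n - ∑ q ∈ S, (Real.log q - Real.log 2) := by
        rw [Finset.sum_ite_mem, Finset.inter_eq_right.mpr hSsub, hlog]
    _ = Real.log n - ∑ q ∈ S, Real.log q + S.card * Real.log 2 := by
        rw [Finset.sum_sub_distrib, Finset.sum_const, nsmul_eq_mul]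
        ring

theorem stmt_16 (μ : ℕ → ℝ)
    (hμp : ∀ p n : ℕ, p.Prime → 0 < n → μ (p ^ n) = Real.log p + Real.log n)
    (hμmul : ∀ m n : ℕ, 0 < m → 0 < n → Nat.Coprime m n → μ (m * n) = μ m + μ n)
    (k : ℕ) (hk : 0 < k) (p : Fin k → ℕ) (hinj : Function.Injective p)
    (hW : ∀ i, (p i).Prime ∧ (p i) ^ 2 ∣ 2 ^ (p i - 1) - 1) :
    Real.log (2 ^ (Finset.univ.lcm fun i => p i - 1)) -
        μ (1 * (2 ^ (Finset.univ.lcm fun i => p i - 1) - 1) *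
            2 ^ (Finset.univ.lcm fun i => p i - 1)) >
      Real.log ((∏ i, (p i : ℝ)) /
        (2 ^ (k + 1) * (Finset.univ.lcm fun i => p i - 1 : ℕ))) := by
  set L := Finset.univ.lcm fun i => p i - 1 with hLdef
  -- basic facts about the primes
  have hp3 : ∀ i, 3 ≤ p i := by
    intro i
    rcases hW i with ⟨hpr, hdvd⟩
    have hne2 : p i ≠ 2 := by
      intro h
      rw [h] at hdvd
      norm_num at hdvd
    have := hpr.two_le
    omega
  have hLpos : 0 < L := by
    rcases Nat.eq_zero_or_pos L with h | h
    · exfalso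
      rw [hLdef, Finset.lcm_eq_zero_iff] at h
      obtain ⟨i, -, hi⟩ := h
      have := hp3 i
      omega
    · exact h
  have hdvdL : ∀ i, p i - 1 ∣ L := fun i => Finset.dvd_lcm (Finset.mem_univ i)
  have h2L : 1 < 2 ^ L := Nat.one_lt_two_pow_iff.mpr hLpos.ne'
  have hNpos : 0 < 2 ^ L - 1 := by omega
  have hsq : ∀ i, p i ^ 2 ∣ 2 ^ L - 1 := by
    intro i
    obtain ⟨m, hm⟩ := hdvdL i
    refine (hW i).2.trans ?_
    have h := Nat.sub_dvd_pow_sub_pow (2 ^ (p i - 1)) 1 m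
    rwa [one_pow, ← pow_mul, ← hm] at h
  set S : Finset ℕ := Finset.image p Finset.univ with hSdef
  have hcard : S.card = k := by
    rw [hSdef, Finset.card_image_of_injective _ hinj, Finset.card_univ, Fintype.card_fin]
  have hSsum : ∑ q ∈ S, Real.log q = ∑ i, Real.log (p i) :=
    Finset.sum_image fun x _ y _ h => hinj h
  have hcop : Nat.Coprime (2 ^ L - 1) (2 ^ L) := by
    have h : 2 ^ L - 1 + 1 = 2 ^ L := by omega
    rw [← h]
    simp
  have hmux : μ (1 * (2 ^ L - 1) * 2 ^ L) = μ (2 ^ L - 1) + (Real.log 2 + Real.log L) := by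
    rw [one_mul, hμmul _ _ hNpos (by omega) hcop, hμp 2 L Nat.prime_two hLpos]
    norm_num
  have hmuN := mu_le μ hμp hμmul (2 ^ L - 1) hNpos S (by
    intro q hq
    rw [hSdef, Finset.mem_image] at hq
    obtain ⟨i, -, rfl⟩ := hq
    exact ⟨(hW i).1, hsq i⟩)
  rw [hcard, hSsum] at hmuN
  have hlogN : Real.log ((2 ^ L - 1 : ℕ) : ℝ) < L * Real.log 2 := by
    have hlt : ((2 ^ L - 1 : ℕ) : ℝ) < (2 : ℝ) ^ L := by
      have : (2 ^ L - 1 : ℕ) < 2 ^ L := by omega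
      exact_mod_cast this
    calc Real.log ((2 ^ L - 1 : ℕ) : ℝ) < Real.log ((2 : ℝ) ^ L) :=
          Real.log_lt_log (by exact_mod_cast hNpos) hlt
      _ = L * Real.log 2 := by rw [Real.log_pow]
  have hprodpos : (0 : ℝ) < ∏ i, (p i : ℝ) :=
    Finset.prod_pos fun i _ => by exact_mod_cast (hW i).1.pos
  have hLR : (0 : ℝ) < (L : ℝ) := by exact_mod_cast hLpos
  have hRHS : Real.log ((∏ i, (p i : ℝ)) / (2 ^ (k + 1) * (L : ℕ))) =
      (∑ i, Real.log (p i)) - ((k + 1) * Real.log 2 + Real.log L) := by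
    rw [Real.log_div hprodpos.ne' (by positivity), Real.log_mul (by positivity) hLR.ne',
      Real.log_pow, Real.log_prod fun i _ => by exact_mod_cast (hW i).1.pos.ne']
    push_cast
    ring
  rw [hmux, hRHS, Real.log_pow]
  push_cast
  linarith
end
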